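/- Let (Y,Z) be an ℕ²-valued random variable and suppose a branching process starts with n_0 particles of type L and m_0 of type S; each type-L particle independently has Y children of type L and Z children of type S, and type-S particles have no children. Then for all integers n ≥ 1 and m ≥ 0, the probability that the total number of type-L particles equals n and type-S particles equals m is (n_0/n)·P(n_0 + Σ_{j=1}^n Y_j = n, m_0 + Σ_{j=1}^n Z_j = m), where (Y_j,Z_j) are i.i.d. copies of (Y,Z). -/

import Mathlib

open MeasureTheory ProbabilityTheory Finset

lemma cycle_lemma (n n₀ : ℕ) (hn : 0 < n) (y : ℕ → ℤ) (hy : ∀ j, -1 ≤ y j)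
    (hsum : ∑ j ∈ Finset.range n, y j = -(n₀ : ℤ)) :
    ((Finset.range n).filter
      (fun r => ∀ k < n, -(n₀ : ℤ) < ∑ j ∈ Finset.range k, y ((r + j) % n))).card = n₀ := by
  classical
  set S : ℕ → ℤ := fun t => ∑ j ∈ Finset.range t, y (j % n) with hS
  have hS0 : S 0 = 0 := by simp [hS]
  have hstep : ∀ t, S (t + 1) = S t + y (t % n) := fun t => Finset.sum_range_succ _ t
  have hSn : S n = -(n₀ : ℤ) := by
    rw [← hsum]
    exact Finset.sum_congr rfl (fun j hj => by
      rw [Nat.mod_eq_of_lt (Finset.mem_range.mp hj)])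
  have hperiod : ∀ t, S (t + n) = S t - n₀ := by
    intro t
    induction t with
    | zero => rw [Nat.zero_add, hSn, hS0]; ring
    | succ t ih =>
        have h1 : t + 1 + n = (t + n) + 1 := by omega
        rw [h1, hstep, ih, Nat.add_mod_right, hstep]
        ring
  have hdiff : ∀ r k, S (r + k) - S r = ∑ j ∈ Finset.range k, y ((r + j) % n) := by
    intro r k
    induction k with
    | zero => simp
    | succ k ih =>
        have h1 : r + (k + 1) = (r + k) + 1 := by omega
        rw [h1, hstep, Finset.sum_range_succ, ← ih]
        ring
  have hskip : ∀ t (c : ℤ), S t ≤ c → c ≤ 0 → ∃ s ≤ t, S s = c := by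
    intro t
    induction t with
    | zero =>
        intro c h1 h2
        refine ⟨0, le_refl 0, ?_⟩
        rw [hS0] at h1 ⊢
        omega
    | succ t ih =>
        intro c h1 h2
        by_cases h : S t ≤ c
        · obtain ⟨s, hs, hsc⟩ := ih c h h2
          exact ⟨s, hs.trans (Nat.le_succ t), hsc⟩
        · push_neg at h
          have h3 := hstep t
          have h4 := hy (t % n)
          exact ⟨t + 1, le_refl _, by omega⟩
  set P : ℕ → Prop := fun t => ∀ j < t, S t < S j with hP
  -- counting strict minima in an initial window
  have hcount : ∀ N mN, 0 < N → (∀ t < N, mN ≤ S t) → (∃ t < N, S t = mN) →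
      ((Finset.range N).filter P).card = (1 - mN).toNat := by
    intro N mN hN hmin ⟨t0, ht0, hSt0⟩
    have hmN0 : mN ≤ 0 := by have := hmin 0 hN; rw [hS0] at this; omega
    rw [show (1 - mN).toNat = (Finset.Icc mN 0).card by rw [Int.card_Icc]; omega]
    apply Finset.card_bij (fun t _ => S t)
    · intro a ha
      rw [Finset.mem_filter, Finset.mem_range] at ha
      rw [Finset.mem_Icc]
      refine ⟨hmin a ha.1, ?_⟩
      rcases Nat.eq_zero_or_pos a with h | h
      · rw [h, hS0]
      · have := ha.2 0 h; rw [hS0] at this; omega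
    · intro a ha b hb hab
      rw [Finset.mem_filter, Finset.mem_range] at ha hb
      by_contra hne
      rcases Nat.lt_or_ge a b with h | h
      · have := hb.2 a h; omega
      · have h' : b < a := by omega
        have := ha.2 b h'; omega
    · intro c hc
      rw [Finset.mem_Icc] at hc
      have hex : ∃ s, S s = c := by
        obtain ⟨s, _, hs⟩ := hskip t0 c (by omega) hc.2
        exact ⟨s, hs⟩
      set s0 := Nat.find hex with hs0
      have hs0c : S s0 = c := Nat.find_spec hex
      have hs0min : ∀ j < s0, S s0 < S j := by
        intro j hj
        by_contra hle
        push_neg at hle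
        obtain ⟨s', hs', hs'c⟩ := hskip j c (by omega) hc.2
        have := Nat.find_min hex (show s' < s0 by omega)
        exact this hs'c
      refine ⟨s0, ?_, hs0c⟩
      rw [Finset.mem_filter, Finset.mem_range]
      refine ⟨?_, hs0min⟩
      obtain ⟨s, hst, hs⟩ := hskip t0 c (by omega) hc.2
      have : s0 ≤ s := Nat.find_min' hex hs
      omega
  -- the two minima
  obtain ⟨t1, ht1, hSt1, hm1⟩ : ∃ t1, t1 < n ∧ (∀ t < n, S t1 ≤ S t) ∧ True := by
    obtain ⟨t1, ht1, h⟩ := Finset.exists_min_image (Finset.range n) S ⟨0, Finset.mem_range.mpr hn⟩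
    exact ⟨t1, Finset.mem_range.mp ht1, fun t ht => h t (Finset.mem_range.mpr ht), trivial⟩
  set m1 : ℤ := S t1 with hm1def
  have hcard1 : ((Finset.range n).filter P).card = (1 - m1).toNat :=
    hcount n m1 hn (fun t ht => hSt1 t ht) ⟨t1, ht1, rfl⟩
  have hmin2 : ∀ t < 2 * n, m1 - n₀ ≤ S t := by
    intro t ht
    rcases Nat.lt_or_ge t n with h | h
    · have := hSt1 t h; omega
    · have h1 : t = (t - n) + n := by omega
      rw [h1, hperiod]
      have := hSt1 (t - n) (by omega); omega
  have hcard2 : ((Finset.range (2 * n)).filter P).card = (1 - (m1 - n₀)).toNat := by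
    refine hcount (2 * n) (m1 - n₀) (by omega) hmin2 ⟨t1 + n, by omega, by rw [hperiod]⟩
  have hm10 : m1 ≤ 0 := by have := hSt1 0 hn; rw [hS0] at this; omega
  -- split range (2n)
  have hsplit : Finset.range (2 * n) = Finset.range n ∪ Finset.Ico n (2 * n) := by
    rw [Finset.range_eq_Ico, Finset.range_eq_Ico, Finset.Ico_union_Ico_eq_Ico (Nat.zero_le n) (show n ≤ 2 * n by omega)]
  have hdisj : Disjoint ((Finset.range n).filter P) ((Finset.Ico n (2 * n)).filter P) := by
    apply Finset.disjoint_filter_filter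
    rw [Finset.range_eq_Ico]
    exact Finset.Ico_disjoint_Ico_consecutive 0 n (2 * n)
  have hcardIco : ((Finset.Ico n (2 * n)).filter P).card = n₀ := by
    have h1 : ((Finset.range (2 * n)).filter P).card
        = ((Finset.range n).filter P).card + ((Finset.Ico n (2 * n)).filter P).card := by
      rw [hsplit, Finset.filter_union, Finset.card_union_of_disjoint hdisj]
    rw [hcard1, hcard2] at h1
    omega
  -- bijection: good rotations ↔ strict minima in [n, 2n)
  rw [← hcardIco]
  apply Finset.card_bij (fun r _ => r + n)
  · intro r hr
    rw [Finset.mem_filter, Finset.mem_range] at hr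
    obtain ⟨hrn, hgood⟩ := hr
    rw [Finset.mem_filter, Finset.mem_Ico]
    refine ⟨⟨by omega, by omega⟩, ?_⟩
    have hkey : ∀ k < n, S (r + n) < S (r + k) := by
      intro k hk
      have := hgood k hk
      rw [← hdiff] at this
      have := hperiod r
      omega
    intro j hj
    rcases Nat.lt_or_ge j r with h | h
    · have h1 : j + n = r + (j + n - r) := by omega
      have h2 := hkey (j + n - r) (by omega)
      rw [← h1] at h2
      have h3 := hperiod j
      omega
    · have h1 : j = r + (j - r) := by omega
      have h2 := hkey (j - r) (by omega)
      rw [← h1] at h2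
      exact h2
  · intro a _ b _ hab; omega
  · intro t ht
    rw [Finset.mem_filter, Finset.mem_Ico] at ht
    obtain ⟨⟨htn, ht2n⟩, hminP⟩ := ht
    obtain ⟨r, rfl⟩ : ∃ r, t = r + n := ⟨t - n, by omega⟩
    refine ⟨r, ?_, by omega⟩
    rw [Finset.mem_filter, Finset.mem_range]
    refine ⟨by omega, ?_⟩
    intro k hk
    rw [← hdiff]
    have h1 := hminP (r + k) (by omega)
    have h3 := hperiod r
    omega

/-- **Sesqui-type Otter–Dwass formula.** A two-type branching process starts with `n₀`
particles of type `L` and `m₀` of type `S`; each type-`L` particle independently has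
offspring distributed as `(Y, Z)` (type-`L` resp. type-`S` children), and type-`S`
particles are barren. Via the standard exploration (random-walk) representation with
i.i.d. copies `(Y_j, Z_j)` of `(Y, Z)`, the total number of type-`L` particles equals `n`
iff the walk `n₀ + ∑_{j<k}(Y_j − 1)` stays positive for `k < n` and hits `0` at `k = n`,
and then the total number of type-`S` particles is `m₀ + ∑_{j<n} Z_j`. The formula: for
`n ≥ 1`, `m ≥ 0`,
`P(|bp^L| = n, |bp^S| = m) = (n₀/n) · P(n₀ + ∑_{j≤n} Y_j = n, m₀ + ∑_{j≤n} Z_j = m)`. -/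
theorem otter_dwass_sesqui_type
    {Ω : Type*} [MeasurableSpace Ω] (μ : Measure Ω) [IsProbabilityMeasure μ]
    (Y Z : ℕ → Ω → ℕ) (hY : ∀ j, Measurable (Y j)) (hZ : ∀ j, Measurable (Z j))
    (hindep : iIndepFun (fun j ω => (Y j ω, Z j ω)) μ)
    (hident : ∀ j, IdentDistrib (fun ω => (Y j ω, Z j ω)) (fun ω => (Y 0 ω, Z 0 ω)) μ μ)
    (n₀ m₀ : ℕ) (n m : ℕ) (hn : 1 ≤ n) :
    μ {ω | (∀ k < n, 0 < (n₀ : ℤ) + ∑ j ∈ Finset.range k, ((Y j ω : ℤ) - 1)) ∧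
        (n₀ : ℤ) + ∑ j ∈ Finset.range n, ((Y j ω : ℤ) - 1) = 0 ∧
        m₀ + ∑ j ∈ Finset.range n, Z j ω = m}
      = (n₀ : ENNReal) / n *
        μ {ω | n₀ + ∑ j ∈ Finset.range n, Y j ω = n ∧
            m₀ + ∑ j ∈ Finset.range n, Z j ω = m} := by
  classical
  have hn' : 0 < n := hn
  set W : ℕ → Ω → ℕ × ℕ := fun j ω => (Y j ω, Z j ω) with hWdef
  have hWm : ∀ j, Measurable (W j) := fun j => (hY j).prodMk (hZ j)
  set ν : Measure (ℕ × ℕ) := Measure.map (W 0) μ with hνdef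
  set vec : Ω → (Fin n → ℕ × ℕ) := fun ω j => W (j : ℕ) ω with hvecdef
  have hvecm : Measurable vec := measurable_pi_iff.mpr (fun j => hWm j)
  set p : (Fin n → ℕ × ℕ) → ENNReal := fun v => ∏ j : Fin n, ν {v j} with hpdef
  have hWsingle : ∀ (i : ℕ) (x : ℕ × ℕ), μ (W i ⁻¹' {x}) = ν {x} := by
    intro i x
    rw [hνdef, ← (hident i).map_eq, Measure.map_apply (hWm i) (measurableSet_singleton x)]
  -- measure of an atom
  have hatom : ∀ v : Fin n → ℕ × ℕ, μ (vec ⁻¹' {v}) = p v := by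
    intro v
    have hpre : vec ⁻¹' {v}
        = ⋂ i ∈ Finset.range n, W i ⁻¹' {x | ∀ h : i < n, x = v ⟨i, h⟩} := by
      ext ω
      simp only [Set.mem_preimage, Set.mem_singleton_iff, Set.mem_iInter, Set.mem_setOf_eq,
        Finset.mem_range, funext_iff]
      constructor
      · intro h i _ hi
        exact h ⟨i, hi⟩
      · intro h j
        exact h (j : ℕ) j.isLt j.isLt
    have hmeas : ∀ i ∈ Finset.range n,
        MeasurableSet {x : ℕ × ℕ | ∀ h : i < n, x = v ⟨i, h⟩} :=
      fun i _ => (Set.to_countable _).measurableSet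
    rw [hpre, hindep.measure_inter_preimage_eq_mul (Finset.range n) hmeas, hpdef,
      ← Fin.prod_univ_eq_prod_range
        (fun i => μ (W i ⁻¹' {x | ∀ h : i < n, x = v ⟨i, h⟩})) n]
    refine Finset.prod_congr rfl (fun j _ => ?_)
    have hSet : {x : ℕ × ℕ | ∀ h : (j : ℕ) < n, x = v ⟨(j : ℕ), h⟩} = {v j} := by
      ext x
      simp only [Set.mem_setOf_eq, Set.mem_singleton_iff]
      constructor
      · intro h; exact h j.isLt
      · intro h _; exact h
    rw [hSet, hWsingle]
  -- measure of a vec-defined set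
  have hμC : ∀ C : Set (Fin n → ℕ × ℕ), μ (vec ⁻¹' C) = ∑' v, C.indicator p v := by
    intro C
    conv_lhs => rw [← Set.biUnion_of_singleton C, Set.preimage_iUnion₂]
    rw [measure_biUnion (Set.to_countable C) ?_ (fun v _ => hvecm (measurableSet_singleton v))]
    · rw [tsum_congr (fun v : C => hatom (v : Fin n → ℕ × ℕ)), tsum_subtype C p]
    · intro v _ w _ hvw
      simp only [Function.onFun, Set.disjoint_left]
      intro ω h1 h2
      rw [Set.mem_preimage, Set.mem_singleton_iff] at h1 h2
      exact hvw (h1 ▸ h2 ▸ rfl)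
  -- the relevant sets of tuples
  set B : Set (Fin n → ℕ × ℕ) :=
    {v | n₀ + ∑ j : Fin n, (v j).1 = n ∧ m₀ + ∑ j : Fin n, (v j).2 = m} with hBdef
  set good : ℕ → (Fin n → ℕ × ℕ) → Prop := fun r v =>
    ∀ k < n, -(n₀ : ℤ) <
      ∑ j ∈ Finset.range k, (((v ⟨(r + j) % n, Nat.mod_lt _ hn'⟩).1 : ℤ) - 1) with hgooddef
  set Cset : ℕ → Set (Fin n → ℕ × ℕ) := fun r => {v | good r v ∧ v ∈ B} with hCdef
  have hsum1 : ∀ ω, ∑ j : Fin n, (vec ω j).1 = ∑ j ∈ Finset.range n, Y j ω :=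
    fun ω => Fin.sum_univ_eq_sum_range (fun i => Y i ω) n
  have hsum2 : ∀ ω, ∑ j : Fin n, (vec ω j).2 = ∑ j ∈ Finset.range n, Z j ω :=
    fun ω => Fin.sum_univ_eq_sum_range (fun i => Z i ω) n
  -- identification of the RHS event
  have hRHS : {ω | n₀ + ∑ j ∈ Finset.range n, Y j ω = n ∧
      m₀ + ∑ j ∈ Finset.range n, Z j ω = m} = vec ⁻¹' B := by
    ext ω
    simp only [Set.mem_setOf_eq, Set.mem_preimage, hBdef, hsum1 ω, hsum2 ω]
  -- identification of the LHS event
  have hLHS : {ω | (∀ k < n, 0 < (n₀ : ℤ) + ∑ j ∈ Finset.range k, ((Y j ω : ℤ) - 1)) ∧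
      (n₀ : ℤ) + ∑ j ∈ Finset.range n, ((Y j ω : ℤ) - 1) = 0 ∧
      m₀ + ∑ j ∈ Finset.range n, Z j ω = m} = vec ⁻¹' (Cset 0) := by
    ext ω
    simp only [Set.mem_setOf_eq, Set.mem_preimage, hCdef, hBdef, Set.mem_setOf_eq, hgooddef,
      hsum1 ω, hsum2 ω]
    have hpos : (∀ k < n, 0 < (n₀ : ℤ) + ∑ j ∈ Finset.range k, ((Y j ω : ℤ) - 1)) ↔
        (∀ k < n, -(n₀ : ℤ) <
          ∑ j ∈ Finset.range k, (((vec ω ⟨(0 + j) % n, Nat.mod_lt _ hn'⟩).1 : ℤ) - 1)) := by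
      refine forall₂_congr (fun k hk => ?_)
      have hterm : ∑ j ∈ Finset.range k, (((vec ω ⟨(0 + j) % n, Nat.mod_lt _ hn'⟩).1 : ℤ) - 1)
          = ∑ j ∈ Finset.range k, ((Y j ω : ℤ) - 1) := by
        refine Finset.sum_congr rfl (fun j hj => ?_)
        have hjn : (0 + j) % n = j := by
          rw [Nat.zero_add]
          exact Nat.mod_eq_of_lt (by have := Finset.mem_range.mp hj; omega)
        simp only [hjn]
        rfl
      rw [hterm]
      constructor <;> intro h <;> omega
    have hfin : ((n₀ : ℤ) + ∑ j ∈ Finset.range n, ((Y j ω : ℤ) - 1) = 0) ↔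
        (n₀ + ∑ j ∈ Finset.range n, Y j ω = n) := by
      have hcast : ∑ j ∈ Finset.range n, ((Y j ω : ℤ) - 1)
          = (∑ j ∈ Finset.range n, Y j ω : ℕ) - (n : ℤ) := by
        rw [Finset.sum_sub_distrib, Finset.sum_const, Finset.card_range]
        push_cast
        ring
      rw [hcast]
      omega
    rw [hpos, hfin]
  -- rotation invariance
  have key1 : ∀ r < n, (∑' v, (Cset r).indicator p v) = ∑' v, (Cset 0).indicator p v := by
    intro r hr
    have hinj : Function.Injective
        (fun j : Fin n => (⟨(r + (j : ℕ)) % n, Nat.mod_lt _ hn'⟩ : Fin n)) := by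
      intro j₁ j₂ h
      have h' : (r + (j₁ : ℕ)) % n = (r + (j₂ : ℕ)) % n := congrArg Fin.val h
      have h1 : (j₁ : ℕ) % n = (j₂ : ℕ) % n := Nat.ModEq.add_left_cancel' r h'
      rw [Nat.mod_eq_of_lt j₁.isLt, Nat.mod_eq_of_lt j₂.isLt] at h1
      exact Fin.ext h1
    set σ : Fin n ≃ Fin n :=
      Equiv.ofBijective _ (Finite.injective_iff_bijective.mp hinj) with hσdef
    have hσ : ∀ j : Fin n, σ j = ⟨(r + (j : ℕ)) % n, Nat.mod_lt _ hn'⟩ := fun j => rfl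
    set e : (Fin n → ℕ × ℕ) ≃ (Fin n → ℕ × ℕ) :=
      ⟨fun v => v ∘ σ, fun v => v ∘ σ.symm,
        fun v => funext fun j => by simp, fun v => funext fun j => by simp⟩ with hedef
    have hpoint : ∀ v, (Cset 0).indicator p (e v) = (Cset r).indicator p v := by
      intro v
      have hpe : p (e v) = p v := by
        simp only [hpdef, hedef, Equiv.coe_fn_mk, Function.comp_apply]
        exact Equiv.prod_comp σ (fun i => ν {v i})
      have hBe : e v ∈ B ↔ v ∈ B := by
        simp only [hBdef, Set.mem_setOf_eq, hedef, Equiv.coe_fn_mk, Function.comp_apply]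
        rw [Equiv.sum_comp σ (fun i => (v i).1), Equiv.sum_comp σ (fun i => (v i).2)]
      have hge : good 0 (e v) ↔ good r v := by
        simp only [hgooddef]
        refine forall₂_congr (fun k hk => ?_)
        have hterm : ∑ j ∈ Finset.range k, (((e v ⟨(0 + j) % n, Nat.mod_lt _ hn'⟩).1 : ℤ) - 1)
            = ∑ j ∈ Finset.range k, (((v ⟨(r + j) % n, Nat.mod_lt _ hn'⟩).1 : ℤ) - 1) := by
          refine Finset.sum_congr rfl (fun j hj => ?_)
          have hjn : (0 + j) % n = j := by
            rw [Nat.zero_add]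
            exact Nat.mod_eq_of_lt (by have := Finset.mem_range.mp hj; omega)
          simp only [hjn, hedef, Equiv.coe_fn_mk, Function.comp_apply, hσ]
        rw [hterm]
      have hmem : e v ∈ Cset 0 ↔ v ∈ Cset r := by
        simp only [hCdef, Set.mem_setOf_eq, hge, hBe]
      by_cases hv : v ∈ Cset r
      · rw [Set.indicator_of_mem (hmem.mpr hv), Set.indicator_of_mem hv, hpe]
      · rw [Set.indicator_of_notMem (fun hc => hv (hmem.mp hc)),
          Set.indicator_of_notMem hv]
    calc (∑' v, (Cset r).indicator p v)
        = ∑' v, (Cset 0).indicator p (e v) := tsum_congr (fun v => (hpoint v).symm)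
      _ = ∑' v, (Cset 0).indicator p v := e.tsum_eq ((Cset 0).indicator p)
  -- pointwise counting
  have key2 : ∀ v, (∑ r ∈ Finset.range n, (Cset r).indicator p v)
      = (n₀ : ENNReal) * B.indicator p v := by
    intro v
    by_cases hvB : v ∈ B
    · have hsumY : (n₀ : ℤ) + ∑ j : Fin n, ((v j).1 : ℤ) = n := by
        have h := hvB.1
        exact_mod_cast congrArg (Nat.cast : ℕ → ℤ) h
      have hcyc := cycle_lemma n n₀ hn'
        (fun i => ((v ⟨i % n, Nat.mod_lt _ hn'⟩).1 : ℤ) - 1)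
        (fun i => by
          show -1 ≤ ((v ⟨i % n, Nat.mod_lt _ hn'⟩).1 : ℤ) - 1
          have h := Int.natCast_nonneg (v ⟨i % n, Nat.mod_lt _ hn'⟩).1
          omega)
        (by
          have hconv : ∑ j ∈ Finset.range n, (((v ⟨j % n, Nat.mod_lt _ hn'⟩).1 : ℤ) - 1)
              = (∑ j : Fin n, ((v j).1 : ℤ)) - n := by
            rw [Finset.sum_sub_distrib, Finset.sum_const, Finset.card_range,
              ← Fin.sum_univ_eq_sum_range
                (fun i => ((v ⟨i % n, Nat.mod_lt _ hn'⟩).1 : ℤ)) n]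
            have : ∀ j : Fin n,
                ((v ⟨(j : ℕ) % n, Nat.mod_lt _ hn'⟩).1 : ℤ) = ((v j).1 : ℤ) := by
              intro j
              have hj : (j : ℕ) % n = (j : ℕ) := Nat.mod_eq_of_lt j.isLt
              simp only [hj, Fin.eta]
            rw [Finset.sum_congr rfl (fun j _ => this j)]
            ring
          rw [hconv]
          omega)
      have hfilter : (Finset.range n).filter (fun r => good r v)
          = (Finset.range n).filter (fun r => ∀ k < n, -(n₀ : ℤ) <
              ∑ j ∈ Finset.range k,
                ((fun i => ((v ⟨i % n, Nat.mod_lt _ hn'⟩).1 : ℤ) - 1) ((r + j) % n))) := by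
        refine Finset.filter_congr (fun r _ => ?_)
        simp only [hgooddef]
        refine forall₂_congr (fun k hk => ?_)
        have hterm : ∀ j, ((v ⟨((r + j) % n) % n, Nat.mod_lt _ hn'⟩).1 : ℤ) - 1
            = ((v ⟨(r + j) % n, Nat.mod_lt _ hn'⟩).1 : ℤ) - 1 := by
          intro j
          have : ((r + j) % n) % n = (r + j) % n := Nat.mod_mod_of_dvd _ dvd_rfl
          simp only [this]
        rw [Finset.sum_congr rfl (fun j _ => (hterm j).symm)]
      have hcount : ((Finset.range n).filter (fun r => good r v)).card = n₀ := by
        rw [hfilter]; exact hcyc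
      have hCr : ∀ r, (Cset r).indicator p v = if good r v then p v else 0 := by
        intro r
        by_cases hg : good r v
        · rw [if_pos hg, Set.indicator_of_mem (by exact ⟨hg, hvB⟩)]
        · rw [if_neg hg, Set.indicator_of_notMem (fun hc => hg hc.1)]
      rw [Finset.sum_congr rfl (fun r _ => hCr r), Finset.sum_ite, Finset.sum_const,
        Finset.sum_const_zero, add_zero, hcount, Set.indicator_of_mem hvB, nsmul_eq_mul]
    · have hCr : ∀ r ∈ Finset.range n, (Cset r).indicator p v = 0 := by
        intro r _
        exact Set.indicator_of_notMem (fun hc => hvB hc.2) p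
      rw [Finset.sum_congr rfl hCr, Finset.sum_const_zero,
        Set.indicator_of_notMem hvB, mul_zero]
  -- assemble
  rw [hLHS, hRHS, hμC, hμC]
  have hmain : (n : ENNReal) * ∑' v, (Cset 0).indicator p v
      = (n₀ : ENNReal) * ∑' v, B.indicator p v := by
    calc (n : ENNReal) * ∑' v, (Cset 0).indicator p v
        = ∑ r ∈ Finset.range n, ∑' v, (Cset r).indicator p v := by
          rw [Finset.sum_congr rfl (fun r hr => key1 r (Finset.mem_range.mp hr)),
            Finset.sum_const, Finset.card_range, nsmul_eq_mul]
      _ = ∑' v, ∑ r ∈ Finset.range n, (Cset r).indicator p v :=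
          (Summable.tsum_finsetSum (fun _ _ => ENNReal.summable)).symm
      _ = ∑' v, (n₀ : ENNReal) * B.indicator p v := tsum_congr key2
      _ = (n₀ : ENNReal) * ∑' v, B.indicator p v := ENNReal.tsum_mul_left
  have hne : (n : ENNReal) ≠ 0 := by
    simp only [ne_eq, Nat.cast_eq_zero]; omega
  have htop : (n : ENNReal) ≠ ⊤ := ENNReal.natCast_ne_top n
  have h1 : (∑' v, (Cset 0).indicator p v)
      = (n : ENNReal)⁻¹ * ((n : ENNReal) * ∑' v, (Cset 0).indicator p v) := by
    rw [← mul_assoc, ENNReal.inv_mul_cancel hne htop, one_mul]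
  rw [h1, hmain, ENNReal.div_eq_inv_mul]
  ring
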